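/- Let n be even, W(D_n) = (ℤ/2)^{n−1} ⋊ S_n (even sign changes), and let t = (t_1,...,t_n) ∈ (ℝ/ℤ)^n with t_1 = ... = t_{n−1} = −t_n and t_i ∉ {0, 1/2, 1/4, 3/4} for all i (in particular 2t_i ≠ 0). Then the stabilizer W_t has order n! but is not conjugate in W(D_n) to the subgroup S_n of pure permutations. -/

import Mathlib

/-!
STATEMENT 12: Let `n` be even, `W(D_n) = (ℤ/2)^{n−1} ⋊ S_n` (even sign changes), and
`t = (t_1,…,t_n) ∈ (ℝ/ℤ)^n` with `t_1 = … = t_{n−1} = −t_n` and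
`t_i ∉ {0, 1/2, 1/4, 3/4}` for all `i`.  Then the stabilizer `W_t` has order `n!` but
is not conjugate in `W(D_n)` to the subgroup `S_n` of pure permutations.
-/

open Pointwise

/-- The sign group `(ℤ/2)^n`, realized multiplicatively as `Fin n → ℤˣ`. -/
abbrev Signs (n : ℕ) := Fin n → ℤˣ

/-- A permutation of `Fin n` acts on `Signs n` by permuting the coordinates. -/
def permAutSigns {n : ℕ} (σ : Equiv.Perm (Fin n)) : MulAut (Signs n) where
  toFun v := v ∘ σ.symm
  invFun v := v ∘ σ
  left_inv v := by funext i; simp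
  right_inv v := by funext i; simp
  map_mul' v w := rfl

/-- The action of `S_n` on `(ℤ/2)^n` permuting coordinates, as a homomorphism. -/
def permHom (n : ℕ) : Equiv.Perm (Fin n) →* MulAut (Signs n) where
  toFun := permAutSigns
  map_one' := MulEquiv.ext fun v => rfl
  map_mul' σ τ := MulEquiv.ext fun v => rfl

/-- The hyperoctahedral group `W(B_n) = (ℤ/2)^n ⋊ S_n`. -/
abbrev WB (n : ℕ) := SemidirectProduct (Signs n) (Equiv.Perm (Fin n)) (permHom n)

/-- `W(B_n)` acts on `M^n` for any additive group `M` (e.g. the torus `(ℝ/ℤ)^n` or the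
Cartan subalgebra `k^n`) by permuting the coordinates and negating some of them. -/
instance WBAction {n : ℕ} {M : Type*} [AddCommGroup M] : MulAction (WB n) (Fin n → M) where
  smul w t := fun i => ((w.left i : ℤ)) • t (w.right⁻¹ i)
  one_smul t := by
    funext i
    show (((1 : WB n).left i : ℤ)) • t ((1 : WB n).right⁻¹ i) = t i
    simp
  mul_smul w w' t := by
    funext i
    show (((w * w').left i : ℤ)) • t ((w * w').right⁻¹ i)
      = ((w.left i : ℤ)) • ((w'.left (w.right⁻¹ i) : ℤ)) • t (w'.right⁻¹ (w.right⁻¹ i))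
    rw [SemidirectProduct.mul_left, SemidirectProduct.mul_right]
    simp [permHom, permAutSigns, mul_inv_rev, Units.val_mul, mul_smul, Equiv.Perm.inv_def]

/-- The product-of-signs character of `W(B_n)`. -/
def signProd (n : ℕ) : WB n →* ℤˣ where
  toFun w := ∏ i, w.left i
  map_one' := by simp
  map_mul' w w' := by
    show (∏ i, (w * w').left i) = _
    rw [SemidirectProduct.mul_left]
    show (∏ i, w.left i * w'.left (w.right.symm i)) = _
    rw [Finset.prod_mul_distrib]
    congr 1
    exact Equiv.prod_comp w.right.symm w'.left

/-- The Weyl group `W(D_n) = (ℤ/2)^{n-1} ⋊ S_n` of even sign changes. -/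
abbrev WD (n : ℕ) : Subgroup (WB n) := (signProd n).ker

/-- The subgroup `S_n ⊂ W(D_n)` of pure permutations (trivial sign change part). -/
def SnInWD (n : ℕ) : Subgroup (WD n) :=
  (SemidirectProduct.inr : Equiv.Perm (Fin n) →* WB n).range.subgroupOf (WD n)


lemma two_torsion (θ : AddCircle (1:ℝ)) (h : θ + θ = 0) : θ = 0 ∨ θ = ((1/2:ℝ) : AddCircle (1:ℝ)) := by
  induction θ using QuotientAddGroup.induction_on with
  | H x =>
    rw [← AddCircle.coe_add, AddCircle.coe_eq_zero_iff] at h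
    obtain ⟨m, hm⟩ := h
    rw [zsmul_eq_mul, mul_one] at hm
    rcases Int.even_or_odd m with ⟨l, rfl⟩ | ⟨l, rfl⟩
    · left
      rw [AddCircle.coe_eq_zero_iff]
      exact ⟨l, by rw [zsmul_eq_mul, mul_one]; push_cast at hm; linarith⟩
    · right
      have : ((x - 1/2 : ℝ) : AddCircle (1:ℝ)) = 0 := by
        rw [AddCircle.coe_eq_zero_iff]
        exact ⟨l, by rw [zsmul_eq_mul, mul_one]; push_cast at hm; linarith⟩
      rw [AddCircle.coe_sub, sub_eq_zero] at this
      exact this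

/-- The sign vector forced on a stabilizer element with permutation part `ρ`. -/
def epsSign (n : ℕ) (ρ : Equiv.Perm (Fin n)) : Signs n :=
  fun i => if (((i : ℕ) = n - 1) ↔ (((ρ⁻¹ i : Fin n) : ℕ) = n - 1)) then 1 else -1

lemma epsSign_prod (n : ℕ) (hn : 0 < n) (ρ : Equiv.Perm (Fin n)) :
    ∏ i, epsSign n ρ i = 1 := by
  set k : Fin n := ⟨n - 1, Nat.sub_lt hn one_pos⟩ with hk
  have hiff : ∀ i : Fin n, ((i : ℕ) = n - 1) ↔ i = k := fun i => by
    rw [Fin.ext_iff]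
  have hsplit : ∀ i, epsSign n ρ i
      = (if i = k then (-1 : ℤˣ) else 1) * (if ρ⁻¹ i = k then (-1 : ℤˣ) else 1) := by
    intro i
    have e1 := hiff i
    have e2 := hiff (ρ⁻¹ i)
    rw [epsSign]
    simp only [e1, e2]
    by_cases h1 : i = k <;> by_cases h2 : ρ⁻¹ i = k <;> simp [h1, h2]
  rw [Finset.prod_congr rfl (fun i _ => hsplit i), Finset.prod_mul_distrib]
  have h1 : (∏ i, if i = k then (-1 : ℤˣ) else 1) = -1 := by
    rw [Finset.prod_ite_eq' Finset.univ k (fun _ => (-1 : ℤˣ))]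
    simp
  have h2 : (∏ i, if ρ⁻¹ i = k then (-1 : ℤˣ) else 1) = -1 := by
    have hc := Equiv.prod_comp (ρ⁻¹ : Equiv.Perm (Fin n))
      (fun j => if j = k then (-1:ℤˣ) else 1)
    rw [hc, Finset.prod_ite_eq' Finset.univ k (fun _ => (-1 : ℤˣ))]
    simp
  rw [h1, h2]
  simp

lemma wb_smul_apply {n : ℕ} {M : Type*} [AddCommGroup M] (u : WB n) (s : Fin n → M) (i : Fin n) :
    (u • s) i = ((u.left i : ℤ)) • s (u.right⁻¹ i) := rfl

lemma eps_stab (n : ℕ) (θ : AddCircle (1:ℝ)) (ρ : Equiv.Perm (Fin n)) :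
    (⟨epsSign n ρ, ρ⟩ : WB n) • (fun i : Fin n => if (i:ℕ) = n-1 then -θ else θ)
      = fun i : Fin n => if (i:ℕ) = n-1 then -θ else θ := by
  funext i
  rw [wb_smul_apply]
  show ((epsSign n ρ i : ℤ)) • (if ((ρ⁻¹ i : Fin n) : ℕ) = n-1 then -θ else θ)
      = if (i:ℕ) = n-1 then -θ else θ
  rw [epsSign]
  by_cases hP : (i:ℕ) = n-1 <;> by_cases hQ : ((ρ⁻¹ i : Fin n) : ℕ) = n-1 <;>
    simp only [Equiv.Perm.inv_def] at hQ <;> simp [hP, hQ]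

lemma stab_eps (n : ℕ) (θ : AddCircle (1:ℝ)) (hθ : θ ≠ -θ) (u : WB n)
    (hu : u • (fun i : Fin n => if (i:ℕ) = n-1 then -θ else θ)
      = fun i : Fin n => if (i:ℕ) = n-1 then -θ else θ) :
    u.left = epsSign n u.right := by
  have hθ' : -θ ≠ θ := fun h => hθ h.symm
  funext i
  have h := congrFun hu i
  rw [wb_smul_apply] at h
  rw [epsSign]
  rcases Int.units_eq_one_or (u.left i) with h1 | h1 <;> rw [h1] at h ⊢ <;>
    by_cases hP : (i:ℕ) = n-1 <;> by_cases hQ : ((u.right⁻¹ i : Fin n) : ℕ) = n-1 <;>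
    (try simp only [Equiv.Perm.inv_def] at hQ) <;> (try simp [hP, hQ] at h ⊢)
  all_goals first | exact hθ h | exact hθ' h


theorem stabilizer_order_and_nonconjugacy_Dn (n : ℕ) (hn : 0 < n) (hne : Even n)
    (θ : AddCircle (1 : ℝ))
    (h0 : θ ≠ 0) (hhalf : θ ≠ ((1 / 2 : ℝ) : AddCircle (1 : ℝ)))
    (hq : θ ≠ ((1 / 4 : ℝ) : AddCircle (1 : ℝ)))
    (h3q : θ ≠ ((3 / 4 : ℝ) : AddCircle (1 : ℝ)))
    (t : Fin n → AddCircle (1 : ℝ))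
    (ht : t = fun i : Fin n => if (i : ℕ) = n - 1 then -θ else θ) :
    Nat.card (MulAction.stabilizer (WD n) t) = n.factorial ∧
    ∀ g : ConjAct (WD n), g • SnInWD n ≠ MulAction.stabilizer (WD n) t :=
  by
  subst ht
  have hθ : θ ≠ -θ := by
    intro h
    rcases two_torsion θ (by rw [← neg_eq_iff_add_eq_zero]; exact h.symm) with h' | h'
    · exact h0 h'
    · exact hhalf h'
  set k : Fin n := ⟨n - 1, Nat.sub_lt hn one_pos⟩ with hkdef
  have hkval : (k : ℕ) = n - 1 := rfl
  have hmem : ∀ ρ : Equiv.Perm (Fin n), (⟨epsSign n ρ, ρ⟩ : WB n) ∈ WD n := by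
    intro ρ
    show signProd n _ = 1
    show (∏ i, epsSign n ρ i) = 1
    exact epsSign_prod n hn ρ
  have hmem2 : ∀ ρ : Equiv.Perm (Fin n),
      (⟨⟨epsSign n ρ, ρ⟩, hmem ρ⟩ : WD n) ∈ MulAction.stabilizer (WD n)
        (fun i : Fin n => if (i : ℕ) = n - 1 then -θ else θ) := by
    intro ρ
    rw [MulAction.mem_stabilizer_iff, Subgroup.smul_def]
    exact eps_stab n θ ρ
  constructor
  · -- cardinality
    let e : Equiv.Perm (Fin n) ≃ (MulAction.stabilizer (WD n)
        (fun i : Fin n => if (i : ℕ) = n - 1 then -θ else θ)) :=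
      { toFun := fun ρ => ⟨⟨⟨epsSign n ρ, ρ⟩, hmem ρ⟩, hmem2 ρ⟩
        invFun := fun x => ((x : WD n) : WB n).right
        left_inv := fun ρ => rfl
        right_inv := fun x => by
          have hx : ((x : WD n) : WB n) •
              (fun i : Fin n => if (i : ℕ) = n - 1 then -θ else θ)
              = fun i : Fin n => if (i : ℕ) = n - 1 then -θ else θ := by
            have := x.2
            rw [MulAction.mem_stabilizer_iff, Subgroup.smul_def] at this
            exact this
          have hl := stab_eps n θ hθ _ hx
          apply Subtype.ext
          apply Subtype.ext
          exact SemidirectProduct.ext hl.symm rfl }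
    rw [Nat.card_congr e.symm, Nat.card_eq_fintype_card, Fintype.card_perm, Fintype.card_fin]
  · -- non-conjugacy
    intro g hg
    set w : WD n := ConjAct.ofConjAct g with hw
    set W : WB n := (w : WB n) with hW
    have key : ∀ l : Fin n, l ≠ k → W.left l = - W.left k := by
      intro l hl
      set ρ : Equiv.Perm (Fin n) := W.right⁻¹ * (Equiv.swap k l) * W.right with hρ
      have hp : (SemidirectProduct.inr ρ : WB n) ∈ WD n := by
        show signProd n _ = 1
        show (∏ i, (SemidirectProduct.inr ρ : WB n).left i) = 1
        simp
      have hpS : (⟨_, hp⟩ : WD n) ∈ SnInWD n := by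
        rw [SnInWD, Subgroup.mem_subgroupOf]
        exact ⟨ρ, rfl⟩
      have h1 : g • (⟨_, hp⟩ : WD n) ∈ MulAction.stabilizer (WD n)
          (fun i : Fin n => if (i : ℕ) = n - 1 then -θ else θ) := by
        rw [← hg]
        exact Subgroup.smul_mem_pointwise_smul _ _ _ hpS
      rw [MulAction.mem_stabilizer_iff, Subgroup.smul_def, ConjAct.smul_def] at h1
      have h1' : ((W * SemidirectProduct.inr ρ * W⁻¹ : WB n) •
          fun i : Fin n => if (i : ℕ) = n - 1 then -θ else θ)
          = fun i : Fin n => if (i : ℕ) = n - 1 then -θ else θ := h1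
      have h4 := stab_eps n θ hθ _ h1'
      have hcr : (W * SemidirectProduct.inr ρ * W⁻¹).right = Equiv.swap k l := by
        simp only [SemidirectProduct.mul_right, SemidirectProduct.inv_right,
          SemidirectProduct.right_inr, hρ]
        group
      have hcl := congrFun h4 l
      rw [hcr] at hcl
      have hleft : (W * SemidirectProduct.inr ρ * W⁻¹).left l
          = W.left l * (W.left (W.right (ρ⁻¹ (W.right⁻¹ l))))⁻¹ := by
        simp only [SemidirectProduct.mul_left, SemidirectProduct.inv_left,
          SemidirectProduct.left_inr, SemidirectProduct.mul_right,
          SemidirectProduct.right_inr, map_one, mul_one]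
        simp [permHom, permAutSigns, Equiv.Perm.mul_apply]
        rfl
      have hidx : W.right (ρ⁻¹ (W.right⁻¹ l)) = k := by
        simp [hρ, Equiv.Perm.mul_apply]
      rw [hleft, hidx] at hcl
      have heps : epsSign n (Equiv.swap k l) l = -1 := by
        rw [epsSign]
        have h1' : ¬ ((l : ℕ) = n - 1) := fun h => hl (Fin.ext (h.trans hkval.symm))
        have h2' : (((Equiv.swap k l)⁻¹ l : Fin n) : ℕ) = n - 1 := by
          rw [Equiv.swap_inv, Equiv.swap_apply_right, hkval]
        simp [h1', h2', hkval]
      rw [heps, mul_inv_eq_iff_eq_mul] at hcl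
      rw [hcl, neg_one_mul]
    have hW1 : (∏ i, W.left i) = 1 := w.2
    have hWm1 : (∏ i, W.left i) = -1 := by
      rw [← Finset.mul_prod_erase Finset.univ _ (Finset.mem_univ k)]
      rw [Finset.prod_congr rfl (fun i hi => key i (Finset.ne_of_mem_erase hi)),
        Finset.prod_const, Finset.card_erase_of_mem (Finset.mem_univ k),
        Finset.card_univ, Fintype.card_fin]
      have hodd : Odd (n - 1) := Nat.Even.sub_odd hn hne odd_one
      rcases Int.units_eq_one_or (W.left k) with h | h <;> rw [h] <;>
        simp [hodd.neg_one_pow]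
    rw [hW1] at hWm1
    exact absurd hWm1 (by decide)
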